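/- Let G be a graph on n vertices and S a minimal connected dominating set of G with |S| ≥ (4/10)n. Then the number of vertices v of G with d_S(v) ≤ 2 is at least n/20, where d_S(v) denotes the number of neighbors of v in S. -/

import Mathlib

open Function Finset

namespace CDSAux

set_option linter.unusedSectionVars false

variable {α : Type*} [Fintype α] [DecidableEq α]

/-- rooted spanning arborescence of `H` with root `r`, encoded by parent function. -/
def Arb (H : SimpleGraph α) (r : α) (f : α → α) : Prop :=
  f r = r ∧ (∀ v, v ≠ r → H.Adj v (f v)) ∧ ∀ v, ∃ k, f^[k] v = r

variable {H : SimpleGraph α} {r : α} {f : α → α} [DecidableRel H.Adj]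

lemma iterate_root (hf : Arb H r f) (k : ℕ) : f^[k] r = r := by
  induction k with
  | zero => rfl
  | succ k ih => rw [Function.iterate_succ_apply, hf.1, ih]

noncomputable def depth (hf : Arb H r f) (v : α) : ℕ := Nat.find (hf.2.2 v)

lemma depth_spec (hf : Arb H r f) (v : α) : f^[depth hf v] v = r := Nat.find_spec (hf.2.2 v)

lemma depth_le (hf : Arb H r f) {v : α} {k : ℕ} (h : f^[k] v = r) : depth hf v ≤ k :=
  Nat.find_le h

lemma depth_root (hf : Arb H r f) : depth hf r = 0 :=
  Nat.le_zero.mp (depth_le hf (by rfl))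

lemma depth_succ (hf : Arb H r f) {v : α} (hv : v ≠ r) :
    depth hf v = depth hf (f v) + 1 := by
  have h1 : depth hf v ≤ depth hf (f v) + 1 := by
    apply depth_le hf
    rw [Function.iterate_succ_apply]
    exact depth_spec hf (f v)
  have h0 : depth hf v ≠ 0 := by
    intro h
    have := depth_spec hf v
    rw [h] at this
    exact hv this
  obtain ⟨k, hk⟩ := Nat.exists_eq_succ_of_ne_zero h0
  have h2 : f^[k] (f v) = r := by
    have := depth_spec hf v
    rwa [hk, Function.iterate_succ_apply] at this
  have := depth_le hf h2
  omega

lemma eq_root_of_fixed (hf : Arb H r f) {v : α} (h : f v = v) : v = r := by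
  have hit : ∀ k, f^[k] v = v := by
    intro k
    induction k with
    | zero => rfl
    | succ k ih => rw [Function.iterate_succ_apply, h, ih]
  obtain ⟨k, hk⟩ := hf.2.2 v
  rw [hit k] at hk
  exact hk

lemma depth_iterate_add (hf : Arb H r f) {x y : α} {k : ℕ} (hx : x ≠ r)
    (h : f^[k] y = x) : depth hf x + k = depth hf y := by
  induction k generalizing y with
  | zero => simp only [Function.iterate_zero, id] at h; rw [h]; omega
  | succ k ih =>
    have hy : y ≠ r := by
      intro hy
      rw [hy, iterate_root hf] at h
      exact hx h.symm
    rw [Function.iterate_succ_apply] at h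
    have := ih h
    rw [depth_succ hf hy]
    omega

/-- number of children of `v` (vertices `u ≠ r` with `f u = v`). -/
def cnt (r : α) (f : α → α) (v : α) : ℕ := (univ.filter fun u => u ≠ r ∧ f u = v).card

lemma mem_children {r : α} {f : α → α} {u v : α} :
    u ∈ (univ.filter fun u => u ≠ r ∧ f u = v) ↔ u ≠ r ∧ f u = v := by simp

lemma cnt_root_pos (hf : Arb H r f) (hcard : 2 ≤ Fintype.card α) : 1 ≤ cnt r f r := by
  obtain ⟨u, hu⟩ := Fintype.exists_ne_of_one_lt_card hcard r
  -- walk from u to r: last step is a child of r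
  obtain ⟨k, hk⟩ := hf.2.2 u
  -- minimal k with f^[k] u = r is depth; use depth
  have hd : f^[depth hf u] u = r := depth_spec hf u
  have h0 : depth hf u ≠ 0 := by
    intro h; rw [h] at hd; exact hu hd
  obtain ⟨m, hm⟩ := Nat.exists_eq_succ_of_ne_zero h0
  rw [hm, Function.iterate_succ_apply'] at hd
  have hne : f^[m] u ≠ r := by
    intro h
    have := depth_le hf h
    omega
  have : f^[m] u ∈ (univ.filter fun w => w ≠ r ∧ f w = r) := by
    simp [hne, hd]
  have := Finset.card_pos.mpr ⟨_, this⟩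
  exact this

lemma sum_cnt (r : α) (f : α → α) : ∑ v, cnt r f v = Fintype.card α - 1 := by
  classical
  have h := Finset.card_eq_sum_card_fiberwise
    (s := univ.filter fun u => u ≠ r) (t := univ) (f := f) (fun x _ => mem_univ _)
  have h2 : (univ.filter fun u : α => u ≠ r).card = Fintype.card α - 1 := by
    rw [Finset.filter_ne']
    rw [Finset.card_erase_of_mem (mem_univ r), Finset.card_univ]
  rw [h2] at h
  rw [h]
  apply Finset.sum_congr rfl
  intro v _
  unfold cnt
  congr 1
  ext u
  simp [and_comm]


/-- If `f'` agrees with `f` along the `f`-chain of `v` (before reaching `r`), the chain survives. -/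
lemma chain_transfer {f f' : α → α} {v : α} {k : ℕ}
    (havoid : ∀ j, j < k → f' (f^[j] v) = f (f^[j] v)) (h : f^[k] v = r) :
    f'^[k] v = r := by
  induction k generalizing v with
  | zero => exact h
  | succ k ih =>
    rw [Function.iterate_succ_apply] at h ⊢
    have h0 := havoid 0 (Nat.succ_pos k)
    simp only [Function.iterate_zero, id] at h0
    rw [h0]
    exact ih (fun j hj => by
      have := havoid (j+1) (by omega)
      rwa [Function.iterate_succ_apply] at this) h

/-- Build an arborescence from a modified parent function. -/
lemma arb_of_update (hf : Arb H r f) {f' : α → α} (hr : f' r = r)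
    (hadj : ∀ v, v ≠ r → H.Adj v (f' v))
    (hreach : ∀ v, f' v = f v ∨ ∃ m, f'^[m] v = r) : Arb H r f' := by
  refine ⟨hr, hadj, ?_⟩
  intro v
  obtain ⟨k, hk⟩ := hf.2.2 v
  induction k generalizing v with
  | zero => exact ⟨0, hk⟩
  | succ k ih =>
    rcases hreach v with he | hm
    · rw [Function.iterate_succ_apply] at hk
      obtain ⟨m, hm⟩ := ih (f v) hk
      exact ⟨m + 1, by rwa [Function.iterate_succ_apply, he]⟩
    · exact hm

section Update

variable {x b : α}

lemma cnt_update_other (hx : x ≠ r) {v : α} (hv1 : v ≠ f x) (hv2 : v ≠ b) :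
    cnt r (Function.update f x b) v = cnt r f v := by
  unfold cnt
  congr 1
  apply Finset.filter_congr
  intro u _
  by_cases hux : u = x
  · subst hux
    simp [Function.update_self, hv1.symm, hv2.symm]
  · simp [Function.update_of_ne hux]

lemma cnt_update_target (hx : x ≠ r) (hb : b ≠ f x) :
    cnt r (Function.update f x b) b = cnt r f b + 1 := by
  unfold cnt
  have : (univ.filter fun u => u ≠ r ∧ Function.update f x b u = b)
      = insert x (univ.filter fun u => u ≠ r ∧ f u = b) := by
    ext u
    by_cases hux : u = x
    · subst hux
      simp [Function.update_self, hx]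
    · simp [Function.update_of_ne hux, hux]
  rw [this, Finset.card_insert_of_notMem]
  simp only [Finset.mem_filter, mem_univ, true_and, not_and]
  intro _
  exact fun h => hb (h ▸ rfl)

lemma cnt_update_source (hx : x ≠ r) (hb : b ≠ f x) :
    cnt r (Function.update f x b) (f x) + 1 = cnt r f (f x) := by
  unfold cnt
  have : (univ.filter fun u => u ≠ r ∧ f u = f x)
      = insert x (univ.filter fun u => u ≠ r ∧ Function.update f x b u = f x) := by
    ext u
    by_cases hux : u = x
    · subst hux
      simp [hx]
    · simp [Function.update_of_ne hux, hux]
  rw [this, Finset.card_insert_of_notMem]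
  simp only [Finset.mem_filter, mem_univ, true_and, not_and]
  intro _
  rw [Function.update_self]
  exact fun h => hb h

end Update


/-- number of leaves -/
noncomputable def leafCount (r : α) (f : α → α) : ℕ := (univ.filter fun v => cnt r f v = 0).card

open Classical in
noncomputable def totalDepth (H : SimpleGraph α) (r : α) (f : α → α) : ℕ :=
  if hf : Arb H r f then ∑ v, depth hf v else 0

lemma totalDepth_eq (hf : Arb H r f) : totalDepth H r f = ∑ v, depth hf v := by
  unfold totalDepth
  rw [dif_pos hf]

/-- existence: connected graphs have arborescences -/
lemma exists_arb (hconn : H.Connected) (r : α) : ∃ f, Arb H r f := by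
  classical
  have hstep : ∀ v : α, v ≠ r → ∃ u, H.Adj v u ∧ H.dist u r < H.dist v r := by
    intro v hv
    obtain ⟨p, hp⟩ := (hconn v r).exists_walk_length_eq_dist
    cases p with
    | nil => exact absurd rfl hv
    | cons hadj q =>
      refine ⟨_, hadj, ?_⟩
      have hq : H.dist _ r ≤ q.length := SimpleGraph.dist_le q
      rw [SimpleGraph.Walk.length_cons] at hp
      omega
  choose g hg1 hg2 using hstep
  refine ⟨fun v => if hv : v = r then r else g v hv, ?_, ?_, ?_⟩
  · simp
  · intro v hv
    simp only [dif_neg hv]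
    exact hg1 v hv
  · intro v
    set F := fun v => if hv : v = r then r else g v hv with hF
    have : ∀ n : ℕ, ∀ v : α, H.dist v r ≤ n → ∃ k, F^[k] v = r := by
      intro n
      induction n with
      | zero =>
        intro v hv
        have : v = r := by
          have := (SimpleGraph.Reachable.dist_eq_zero_iff (hconn v r)).mp (by omega)
          exact this
        exact ⟨0, this⟩
      | succ n ih =>
        intro v hv
        by_cases hvr : v = r
        · exact ⟨0, hvr⟩
        · have hFv : F v = g v hvr := by simp [hF, hvr]
          have hlt := hg2 v hvr
          obtain ⟨k, hk⟩ := ih (g v hvr) (by omega)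
          exact ⟨k + 1, by rw [Function.iterate_succ_apply, hFv, hk]⟩
    exact this (H.dist v r) v le_rfl

/-- existence of lex-optimal arborescence: max leafCount, then min totalDepth -/
lemma exists_opt_arb (hconn : H.Connected) (r : α) :
    ∃ f, Arb H r f ∧ ∀ g, Arb H r g →
      leafCount r g ≤ leafCount r f ∧
      (leafCount r g = leafCount r f → totalDepth H r f ≤ totalDepth H r g) := by
  classical
  obtain ⟨f₀, hf₀⟩ := exists_arb hconn r
  set A : Finset (α → α) := univ.filter fun f => Arb H r f with hA
  have hf₀A : f₀ ∈ A := by simp [hA, hf₀]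
  obtain ⟨f₁, hf₁A, hf₁max⟩ := A.exists_max_image (leafCount r) ⟨f₀, hf₀A⟩
  set A₂ : Finset (α → α) := A.filter fun g => leafCount r g = leafCount r f₁ with hA₂
  obtain ⟨f₂, hf₂A, hf₂min⟩ := A₂.exists_min_image (totalDepth H r) ⟨f₁, by simp [hA₂, hf₁A]⟩
  simp only [hA₂, Finset.mem_filter] at hf₂A
  refine ⟨f₂, by simpa [hA] using hf₂A.1, ?_⟩
  intro g hg
  have hgA : g ∈ A := by simp [hA, hg]
  constructor
  · rw [hf₂A.2]
    exact hf₁max g hgA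
  · intro heq
    exact hf₂min g (by simp [hA₂, hgA, heq, hf₂A.2])


variable (hf : Arb H r f)

lemma cnt_child_pos (hv : (v : α) ≠ r) : 1 ≤ cnt r f (f v) := by
  apply Finset.card_pos.mpr
  exact ⟨v, by simp [hv]⟩

include hf in
lemma exists_chord {x : α} (hx : x ≠ r) (hc1 : cnt r f x = 1)
    (hdeg : 3 ≤ (univ.filter fun y => H.Adj x y).card) :
    ∃ y, H.Adj x y ∧ y ≠ f x ∧ f y ≠ x := by
  classical
  set C : Finset α := univ.filter (fun u => u ≠ r ∧ f u = x) with hC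
  have hCcard : C.card = 1 := hc1
  set T : Finset α := insert (f x) C with hT
  have hTcard : T.card ≤ 2 := by
    apply le_trans (Finset.card_insert_le _ _)
    omega
  have : 0 < ((univ.filter fun y => H.Adj x y) \ T).card := by
    have := Finset.le_card_sdiff T (univ.filter fun y => H.Adj x y)
    omega
  obtain ⟨y, hy⟩ := Finset.card_pos.mp this
  rw [Finset.mem_sdiff] at hy
  obtain ⟨hyN, hyT⟩ := hy
  rw [Finset.mem_filter] at hyN
  refine ⟨y, hyN.2, ?_, ?_⟩
  · intro h
    exact hyT (by simp [hT, h])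
  · intro h
    have hyr : y ≠ r := by
      intro hyr
      rw [hyr, hf.1] at h
      exact hx h.symm
    exact hyT (by simp [hT, hC, hyr, h])

variable (hopt : ∀ g, Arb H r g → leafCount r g ≤ leafCount r f ∧
      (leafCount r g = leafCount r f → totalDepth H r f ≤ totalDepth H r g))

include hf hopt in
lemma no_descendant_chord {x y : α} (hx : x ≠ r) (hc1 : cnt r f x = 1)
    (hadj : H.Adj x y) (hyfx : y ≠ f x) (hfy : f y ≠ x) {k : ℕ} (hk : f^[k] y = x) :
    False := by
  classical
  have hyx : y ≠ x := hadj.ne'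
  have hyr : y ≠ r := by
    intro h
    subst h
    rw [iterate_root hf] at hk
    exact hx hk.symm
  have hk2 : 2 ≤ k := by
    match k, hk with
    | 0, hk => exact absurd hk hyx
    | 1, hk => simp only [Function.iterate_one] at hk; exact absurd hk hfy
    | (n+2), hk => omega
  have hdepth : depth hf x + k = depth hf y := depth_iterate_add hf hx hk
  have havoidx : ∀ j, f^[j] x ≠ y := by
    intro j h
    have := depth_iterate_add hf hyr h
    omega
  set g : α → α := Function.update f y x with hg
  have hgy : g y = x := Function.update_self _ _ _
  have hgchain : ∀ w m, (∀ j, f^[j] w ≠ y) → f^[m] w = r → g^[m] w = r := by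
    intro w m havoid hm
    apply chain_transfer _ hm
    intro j _
    exact Function.update_of_ne (havoid j) _ _
  have hgx : g^[depth hf x] x = r := hgchain x _ havoidx (depth_spec hf x)
  have harbg : Arb H r g := by
    apply arb_of_update hf
    · rw [hg, Function.update_of_ne (Ne.symm hyr), hf.1]
    · intro v hv
      by_cases hvy : v = y
      · subst hvy
        rw [hgy]
        exact hadj.symm
      · rw [hg, Function.update_of_ne hvy]
        exact hf.2.1 v hv
    · intro v
      by_cases hvy : v = y
      · subst hvy
        right
        exact ⟨depth hf x + 1, by rw [Function.iterate_succ_apply, hgy]; exact hgx⟩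
      · left
        exact Function.update_of_ne hvy _ _
  -- leafCount does not decrease
  have hcnt_other : ∀ v, v ≠ f y → v ≠ x → cnt r g v = cnt r f v := by
    intro v h1 h2
    exact cnt_update_other hyr h1 h2
  have hleaf : leafCount r f ≤ leafCount r g := by
    apply Finset.card_le_card
    intro v hv
    rw [Finset.mem_filter] at hv ⊢
    refine ⟨mem_univ _, ?_⟩
    have h1 : v ≠ f y := by
      intro h
      have := cnt_child_pos (v := y) (r := r) (f := f) hyr
      rw [← h] at this
      omega
    have h2 : v ≠ x := by
      intro h
      rw [h] at hv
      omega
    rw [hcnt_other v h1 h2]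
    exact hv.2
  have hleq := (hopt g harbg).1
  have hleaf_eq : leafCount r g = leafCount r f := le_antisymm hleq hleaf
  have htd := (hopt g harbg).2 hleaf_eq
  -- depth decreases pointwise, strictly at y
  have hdepth_g_x : depth harbg x ≤ depth hf x := depth_le harbg hgx
  have hstep_g : ∀ v, v ≠ r → depth harbg v ≤ depth harbg (g v) + 1 := by
    intro v _
    apply depth_le harbg
    rw [Function.iterate_succ_apply]
    exact depth_spec harbg (g v)
  have hmono : ∀ n v, depth hf v = n → depth harbg v ≤ depth hf v := by
    intro n
    induction n using Nat.strong_induction_on with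
    | _ n ih =>
      intro v hv
      by_cases hvr : v = r
      · subst hvr
        rw [depth_root harbg]
        omega
      by_cases hvy : v = y
      · rw [hvy]
        calc depth harbg y ≤ depth harbg (g y) + 1 := hstep_g y hyr
        _ = depth harbg x + 1 := by rw [hgy]
        _ ≤ depth hf x + 1 := by omega
        _ ≤ depth hf y := by omega
      · have hfv : depth hf (f v) < depth hf v := by
          rw [depth_succ hf hvr]
          omega
        calc depth harbg v ≤ depth harbg (g v) + 1 := hstep_g v hvr
        _ = depth harbg (f v) + 1 := by
            have hgv : g v = f v := Function.update_of_ne hvy _ _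
            rw [hgv]
        _ ≤ depth hf (f v) + 1 := by
            apply Nat.succ_le_succ
            exact ih _ (by omega) (f v) rfl
        _ ≤ depth hf v := by omega
  have hstricty : depth harbg y < depth hf y := by
    calc depth harbg y ≤ depth harbg (g y) + 1 := hstep_g y hyr
    _ = depth harbg x + 1 := by rw [hgy]
    _ ≤ depth hf x + 1 := by omega
    _ < depth hf y := by omega
  have hsum : totalDepth H r g < totalDepth H r f := by
    rw [totalDepth_eq hf, totalDepth_eq harbg]
    apply Finset.sum_lt_sum
    · intro i _
      exact hmono _ i rfl
    · exact ⟨y, mem_univ y, hstricty⟩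
  omega


include hf hopt in
lemma key_classify {x : α} (hx : x ≠ r) (hc1 : cnt r f x = 1)
    (hdeg : 3 ≤ (univ.filter fun y => H.Adj x y).card) :
    2 ≤ cnt r f (f x) ∨
    (f x ≠ r ∧ cnt r f (f x) = 1 ∧ 2 ≤ cnt r f (f (f x))) ∨
    (f x = r ∧ cnt r f r = 1) := by
  classical
  obtain ⟨y, hadj, hyfx, hfy⟩ := exists_chord hf hx hc1 hdeg
  have hyx : y ≠ x := hadj.ne'
  have hA : ∀ k, f^[k] y ≠ x := fun k hk =>
    no_descendant_chord (hopt := hopt) (hf := hf) hx hc1 hadj hyfx hfy hk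
  have hax : f x ≠ x := fun h => hx (eq_root_of_fixed hf h)
  have hca : 1 ≤ cnt r f (f x) := cnt_child_pos (f := f) (r := r) hx
  by_cases hca2 : 2 ≤ cnt r f (f x)
  · exact Or.inl hca2
  have hca1 : cnt r f (f x) = 1 := by omega
  have hchain_y : ∀ (g' : α → α), (∀ j, g' (f^[j] y) = f (f^[j] y)) →
      g'^[depth hf y] y = r := by
    intro g' hg'
    exact chain_transfer (fun j _ => hg' j) (depth_spec hf y)
  by_cases hcy : cnt r f y = 0
  · -- y is a leaf; move depends on whether f x = r
    by_cases har : f x = r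
    · refine Or.inr (Or.inr ⟨har, ?_⟩)
      have := hca1
      rwa [har] at this
    · -- double move
      refine Or.inr (Or.inl ⟨har, hca1, ?_⟩)
      by_contra hcb
      set a := f x with ha
      set b := f a with hb
      have hcb1 : cnt r f b = 1 := by
        have := cnt_child_pos (v := a) (r := r) (f := f) har
        rw [← hb] at this
        omega
      have hab : b ≠ a := fun h => har (eq_root_of_fixed hf h)
      have hbx : b ≠ x := by
        intro h
        have d1 : depth hf x = depth hf a + 1 := by rw [ha]; exact depth_succ hf hx
        have d2 : depth hf a = depth hf b + 1 := by rw [hb]; exact depth_succ hf har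
        rw [h] at d2
        omega
      have hcbpos : 1 ≤ cnt r f b := by omega
      have hby : b ≠ y := by
        intro h
        rw [h] at hcbpos
        omega
      have hay : a ≠ y := fun h => hyfx h.symm
      have haxne : a ≠ x := hax
      -- y's chain avoids a
      have havoida : ∀ j, f^[j] y ≠ a := by
        intro j hj
        match j, hj with
        | 0, hj =>
          simp only [Function.iterate_zero, id] at hj
          exact hay hj.symm
        | (j+1), hj =>
          rw [Function.iterate_succ_apply'] at hj
          set w := f^[j] y with hw
          have hwr : w ≠ r := by
            intro h
            rw [h, hf.1] at hj
            exact har hj.symm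
          -- w is a child of a; children of a = {x}
          have hwmem : w ∈ (univ.filter fun u => u ≠ r ∧ f u = a) := by simp [hwr, hj]
          have hxmem : x ∈ (univ.filter fun u => u ≠ r ∧ f u = a) := by simp [hx, ha]
          have hcard : (univ.filter fun u => u ≠ r ∧ f u = a).card = 1 := hca1
          have : w = x := by
            have h1 := Finset.card_le_one.mp (le_of_eq hcard) _ hwmem _ hxmem
            exact h1
          exact hA j (hw ▸ this)
      set f₁ : α → α := Function.update f x y with hf₁
      set f₂ : α → α := Function.update f₁ a x with hf₂
      have hf₂x : f₂ x = y := by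
        rw [hf₂, Function.update_of_ne haxne.symm, hf₁, Function.update_self]
      have hf₂a : f₂ a = x := by rw [hf₂, Function.update_self]
      have hf₂other : ∀ v, v ≠ x → v ≠ a → f₂ v = f v := by
        intro v h1 h2
        rw [hf₂, Function.update_of_ne h2, hf₁, Function.update_of_ne h1]
      -- y's chain avoids x and a, so it transfers to f₂
      have hychain : f₂^[depth hf y] y = r := by
        apply hchain_y
        intro j
        exact hf₂other _ (hA j) (havoida j)
      have harb₂ : Arb H r f₂ := by
        apply arb_of_update hf
        · rw [hf₂other r (Ne.symm hx) (Ne.symm har), hf.1]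
        · intro v hv
          by_cases h1 : v = x
          · rw [h1, hf₂x]; exact hadj
          by_cases h2 : v = a
          · rw [h2, hf₂a]
            have := hf.2.1 x hx
            rw [← ha] at this
            exact this.symm
          · rw [hf₂other v h1 h2]
            exact hf.2.1 v hv
        · intro v
          by_cases h1 : v = x
          · right
            refine ⟨depth hf y + 1, ?_⟩
            rw [h1, Function.iterate_succ_apply, hf₂x]
            exact hychain
          by_cases h2 : v = a
          · right
            refine ⟨depth hf y + 2, ?_⟩
            rw [h2]
            have : depth hf y + 2 = (depth hf y + 1) + 1 := rfl
            rw [this, Function.iterate_succ_apply, hf₂a,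
              Function.iterate_succ_apply, hf₂x]
            exact hychain
          · left
            exact hf₂other v h1 h2
      -- cnt computations
      have hf₁a : f₁ a = b := by
        rw [hf₁, Function.update_of_ne haxne, hb]
      have hcnt₁_other : ∀ v, v ≠ a → v ≠ y → cnt r f₁ v = cnt r f v := by
        intro v h1 h2
        rw [hf₁]
        exact cnt_update_other hx (by rw [← ha]; exact h1) h2
      have hcnt₁a : cnt r f₁ a + 1 = cnt r f a := by
        have := cnt_update_source (f := f) (b := y) hx hyfx
        rw [← hf₁, ← ha] at this
        exact this
      have hcnt₂_other : ∀ v, v ≠ b → v ≠ x → cnt r f₂ v = cnt r f₁ v := by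
        intro v h1 h2
        rw [hf₂]
        exact cnt_update_other har (by rw [hf₁a]; exact h1) h2
      have hcnt₂b : cnt r f₂ b + 1 = cnt r f₁ b := by
        have := cnt_update_source (f := f₁) (x := a) (b := x) har
          (by rw [hf₁a]; exact hbx.symm)
        rw [← hf₂, hf₁a] at this
        exact this
      have hca1' : cnt r f a = 1 := by rw [ha]; exact hca1
      have hcnt₂a : cnt r f₂ a = 0 := by
        rw [hcnt₂_other a hab.symm haxne]
        omega
      have hcnt₂b0 : cnt r f₂ b = 0 := by
        have h1 : cnt r f₁ b = cnt r f b := hcnt₁_other b hab hby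
        omega
      -- leaf count increases
      set Lf : Finset α := univ.filter fun v => cnt r f v = 0 with hLf
      have hymem : y ∈ Lf := by simp [hLf, hcy]
      have hsubset : insert a (insert b (Lf.erase y)) ⊆
          (univ.filter fun v => cnt r f₂ v = 0) := by
        intro v hv
        simp only [Finset.mem_insert, Finset.mem_erase] at hv
        simp only [Finset.mem_filter, mem_univ, true_and]
        rcases hv with hv | hv | hv
        · rw [hv]; exact hcnt₂a
        · rw [hv]; exact hcnt₂b0
        · obtain ⟨hvy, hvLf⟩ := hv
          rw [hLf, Finset.mem_filter] at hvLf
          have hv0 : cnt r f v = 0 := hvLf.2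
          have h1 : v ≠ a := by intro h; rw [h, hca1'] at hv0; omega
          have h2 : v ≠ b := by intro h; rw [h, hcb1] at hv0; omega
          have h3 : v ≠ x := by intro h; rw [h, hc1] at hv0; omega
          rw [hcnt₂_other v h2 h3, hcnt₁_other v h1 hvy]
          exact hv0
      have hbnot : b ∉ Lf.erase y := by
        simp only [Finset.mem_erase, hLf, Finset.mem_filter]
        intro h
        rw [hcb1] at h
        omega
      have hanot : a ∉ insert b (Lf.erase y) := by
        simp only [Finset.mem_insert, Finset.mem_erase, hLf, Finset.mem_filter]
        push_neg
        refine ⟨hab.symm, ?_⟩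
        intro _ _ h
        rw [hca1'] at h
        omega
      have hcard : Lf.card + 1 ≤ leafCount r f₂ := by
        have h1 : (insert a (insert b (Lf.erase y))).card = Lf.card + 1 := by
          rw [Finset.card_insert_of_notMem hanot, Finset.card_insert_of_notMem hbnot,
            Finset.card_erase_of_mem hymem]
          have : 1 ≤ Lf.card := Finset.card_pos.mpr ⟨y, hymem⟩
          omega
        calc Lf.card + 1 = _ := h1.symm
        _ ≤ _ := Finset.card_le_card hsubset
      have hle := (hopt f₂ harb₂).1
      unfold leafCount at hle hcard
      rw [hLf] at hcard
      omega
  · -- c y ≥ 1: single move gives strictly more leaves, contradiction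
    exfalso
    set f' : α → α := Function.update f x y with hf'
    have hf'x : f' x = y := Function.update_self _ _ _
    have hf'other : ∀ v, v ≠ x → f' v = f v := fun v h => Function.update_of_ne h _ _
    have hychain : f'^[depth hf y] y = r := by
      apply hchain_y
      intro j
      exact hf'other _ (hA j)
    have harb' : Arb H r f' := by
      apply arb_of_update hf
      · rw [hf'other r (Ne.symm hx), hf.1]
      · intro v hv
        by_cases h1 : v = x
        · rw [h1, hf'x]; exact hadj
        · rw [hf'other v h1]; exact hf.2.1 v hv
      · intro v
        by_cases h1 : v = x
        · right
          exact ⟨depth hf y + 1, by rw [h1, Function.iterate_succ_apply, hf'x]; exact hychain⟩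
        · left
          exact hf'other v h1
    have hsubset : insert (f x) (univ.filter fun v => cnt r f v = 0) ⊆
        (univ.filter fun v => cnt r f' v = 0) := by
      intro v hv
      rw [Finset.mem_insert] at hv
      rcases hv with hv | hv
      · subst hv
        have := cnt_update_source (b := y) (f := f) hx hyfx
        rw [← hf'] at this
        simp only [Finset.mem_filter, mem_univ, true_and]
        omega
      · rw [Finset.mem_filter] at hv ⊢
        have h1 : v ≠ f x := by
          intro h
          rw [h] at hv
          omega
        have h2 : v ≠ y := by
          intro h
          rw [h] at hv
          exact hcy hv.2
        refine ⟨mem_univ _, ?_⟩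
        rw [cnt_update_other hx h1 h2]
        exact hv.2
    have hnotmem : f x ∉ (univ.filter fun v => cnt r f v = 0) := by
      simp only [Finset.mem_filter, mem_univ, true_and]
      omega
    have hcard : leafCount r f + 1 ≤ leafCount r f' := by
      unfold leafCount
      calc (univ.filter fun v => cnt r f v = 0).card + 1
          = (insert (f x) (univ.filter fun v => cnt r f v = 0)).card := by
            rw [Finset.card_insert_of_notMem hnotmem]
      _ ≤ _ := Finset.card_le_card hsubset
    have := (hopt f' harb').1
    omega


include hf in
lemma leaf_walk {x : α} (hx : x ≠ r) (hc0 : cnt r f x = 0) :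
    ∀ v, v ≠ x → ∃ p : H.Walk v r, x ∉ p.support := by
  have aux : ∀ (k : ℕ) (v : α), f^[k] v = r → v ≠ x → ∃ p : H.Walk v r, x ∉ p.support := by
    intro k
    induction k with
    | zero =>
      intro v hv hvx
      simp only [Function.iterate_zero, id] at hv
      subst hv
      exact ⟨SimpleGraph.Walk.nil, by simp; exact hx⟩
    | succ k ih =>
      intro v hv hvx
      by_cases hvr : v = r
      · subst hvr
        exact ⟨SimpleGraph.Walk.nil, by simp; exact hx⟩
      · rw [Function.iterate_succ_apply] at hv
        have hfvx : f v ≠ x := by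
          intro h
          have : v ∈ (univ.filter fun u => u ≠ r ∧ f u = x) := by simp [hvr, h]
          have := Finset.card_pos.mpr ⟨v, this⟩
          unfold cnt at hc0
          omega
        obtain ⟨p, hp⟩ := ih (f v) hv hfvx
        refine ⟨SimpleGraph.Walk.cons (hf.2.1 v hvr) p, ?_⟩
        rw [SimpleGraph.Walk.support_cons]
        simp only [List.mem_cons, not_or]
        exact ⟨fun h => hvx h.symm, hp⟩
  intro v hvx
  obtain ⟨k, hk⟩ := hf.2.2 v
  exact aux k v hk hvx

include hf in
lemma root_walk {w : α} (hw : w ≠ r) (hfw : f w = r)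
    (huniq : ∀ u, u ≠ r → f u = r → u = w) :
    ∀ v, v ≠ r → ∃ p : H.Walk v w, r ∉ p.support := by
  have aux : ∀ (k : ℕ) (v : α), f^[k] v = r → v ≠ r → ∃ p : H.Walk v w, r ∉ p.support := by
    intro k
    induction k with
    | zero =>
      intro v hv hvr
      simp only [Function.iterate_zero, id] at hv
      exact absurd hv hvr
    | succ k ih =>
      intro v hv hvr
      by_cases hvw : v = w
      · subst hvw
        exact ⟨SimpleGraph.Walk.nil, by simp; exact Ne.symm hw⟩
      · rw [Function.iterate_succ_apply] at hv
        have hfvr : f v ≠ r := by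
          intro h
          exact hvw (huniq v hvr h)
        obtain ⟨p, hp⟩ := ih (f v) hv hfvr
        refine ⟨SimpleGraph.Walk.cons (hf.2.1 v hvr) p, ?_⟩
        rw [SimpleGraph.Walk.support_cons]
        simp only [List.mem_cons, not_or]
        exact ⟨fun h => hvr h.symm, hp⟩
  intro v hvr
  obtain ⟨k, hk⟩ := hf.2.2 v
  exact aux k v hk hvr

omit hf hopt in
/-- The core combinatorial lemma. -/
lemma core (hconn : H.Connected) (hcard : 2 ≤ Fintype.card α) :
    ∃ R : Finset α,
      (∀ x ∈ R, ∃ z, z ≠ x ∧ ∀ v, v ≠ x → ∃ p : H.Walk v z, x ∉ p.support) ∧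
      Fintype.card α ≤
        6 * (R ∪ univ.filter fun v => (univ.filter fun u => H.Adj v u).card ≤ 2).card := by
  classical
  have hne : Nonempty α := hconn.nonempty
  obtain ⟨r⟩ := hne
  obtain ⟨f, hf, hopt⟩ := exists_opt_arb hconn r
  set c : α → ℕ := cnt r f with hc
  have hroot : 1 ≤ c r := cnt_root_pos hf hcard
  set Lf : Finset α := univ.filter fun v => c v = 0 with hLf
  set B₂ : Finset α := univ.filter fun v => 2 ≤ c v with hB₂
  set N₁ : Finset α := univ.filter fun v => c v = 1 with hN₁
  set D : Finset α := univ.filter (fun v => (univ.filter fun u => H.Adj v u).card ≤ 2) with hD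
  set R : Finset α := Lf ∪ univ.filter (fun v => v = r ∧ c r = 1) with hR
  refine ⟨R, ?_, ?_⟩
  · intro x hxR
    rw [hR, Finset.mem_union] at hxR
    rcases hxR with hxL | hxr
    · rw [hLf, Finset.mem_filter] at hxL
      have hxr : x ≠ r := by
        intro h
        rw [h] at hxL
        omega
      exact ⟨r, Ne.symm hxr, leaf_walk hf hxr hxL.2⟩
    · rw [Finset.mem_filter] at hxr
      obtain ⟨-, hxr, hcr1⟩ := hxr
      subst hxr
      -- unique child w of r
      have : (univ.filter fun u => u ≠ x ∧ f u = x).card = 1 := hcr1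
      obtain ⟨w, hw⟩ := Finset.card_eq_one.mp this
      have hwmem : w ∈ univ.filter fun u => u ≠ x ∧ f u = x := by rw [hw]; simp
      rw [Finset.mem_filter] at hwmem
      refine ⟨w, hwmem.2.1, ?_⟩
      apply root_walk hf hwmem.2.1 hwmem.2.2
      intro u hur hfu
      have : u ∈ univ.filter fun u => u ≠ x ∧ f u = x := by simp [hur, hfu]
      rw [hw, Finset.mem_singleton] at this
      exact this
  · -- counting
    set X₁ : Finset α := univ.filter (fun x => x ≠ r ∧ 2 ≤ c (f x)) with hX₁
    set X₂ : Finset α := univ.filter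
      (fun x => x ≠ r ∧ c x = 1 ∧ f x ≠ r ∧ c (f x) = 1 ∧ 2 ≤ c (f (f x))) with hX₂
    set X₀ : Finset α := univ.filter (fun x => x ≠ r ∧ f x = r ∧ c r = 1) with hX₀
    have hX₀card : X₀.card ≤ 1 := by
      apply Finset.card_le_one.mpr
      intro a ha b hb
      rw [hX₀, Finset.mem_filter] at ha hb
      have hcr : (univ.filter fun u => u ≠ r ∧ f u = r).card = 1 := ha.2.2.2
      have hamem : a ∈ univ.filter fun u => u ≠ r ∧ f u = r := by
        simp [ha.2.1, ha.2.2.1]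
      have hbmem : b ∈ univ.filter fun u => u ≠ r ∧ f u = r := by
        simp [hb.2.1, hb.2.2.1]
      exact Finset.card_le_one.mp (le_of_eq hcr) _ hamem _ hbmem
    have hfiber : ∀ b : α, (univ.filter fun u => u ≠ r ∧ f u = b).card = c b := fun b => rfl
    have hX₁card : X₁.card ≤ ∑ b ∈ B₂, c b := by
      rw [Finset.card_eq_sum_card_fiberwise (f := f) (s := X₁) (t := B₂) ?hmap]
      case hmap =>
        intro x hx
        rw [Finset.mem_coe] at hx ⊢
        rw [hX₁, Finset.mem_filter] at hx
        rw [hB₂, Finset.mem_filter]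
        exact ⟨mem_univ _, hx.2.2⟩
      apply Finset.sum_le_sum
      intro b hb
      rw [← hfiber b]
      apply Finset.card_le_card
      intro u hu
      rw [Finset.mem_filter] at hu ⊢
      rw [hX₁, Finset.mem_filter] at hu
      exact ⟨mem_univ _, hu.1.2.1, hu.2⟩
    have hX₂card : X₂.card ≤ ∑ b ∈ B₂, c b := by
      rw [Finset.card_eq_sum_card_fiberwise (f := fun x => f (f x)) (s := X₂) (t := B₂) ?hmap2]
      case hmap2 =>
        intro x hx
        rw [Finset.mem_coe] at hx ⊢
        rw [hX₂, Finset.mem_filter] at hx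
        rw [hB₂, Finset.mem_filter]
        exact ⟨mem_univ _, hx.2.2.2.2.2⟩
      apply Finset.sum_le_sum
      intro b hb
      rw [← hfiber b]
      apply Finset.card_le_card_of_injOn (fun x => f x)
      · intro u hu
        simp only [Finset.mem_coe, Finset.mem_filter] at hu
        rw [hX₂, Finset.mem_filter] at hu
        simp only [Finset.mem_coe, Finset.mem_filter]
        exact ⟨mem_univ _, hu.1.2.2.2.1, hu.2⟩
      · intro u hu v hv huv
        simp only [Finset.mem_coe, Finset.mem_filter] at hu hv
        rw [hX₂, Finset.mem_filter] at hu hv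
        have hu1 : u ∈ univ.filter fun w => w ≠ r ∧ f w = f u := by
          simp [hu.1.2.1]
        have hv1 : v ∈ univ.filter fun w => w ≠ r ∧ f w = f u := by
          simp [hv.1.2.1, huv.symm]
        have hcfu : (univ.filter fun w => w ≠ r ∧ f w = f u).card = 1 := hu.1.2.2.2.2.1
        exact Finset.card_le_one.mp (le_of_eq hcfu) _ hu1 _ hv1
    -- sum identities
    have hsum_all : ∑ v, c v = Fintype.card α - 1 := sum_cnt r f
    have hsplit : ∑ v, c v = ∑ v ∈ B₂, c v + N₁.card := by
      rw [← Finset.sum_filter_add_sum_filter_not univ (fun v => 2 ≤ c v) c]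
      congr 1
      have h1 : ∑ v ∈ univ.filter (fun v => ¬ 2 ≤ c v), c v
          = ∑ v ∈ univ.filter (fun v => ¬ 2 ≤ c v), (if c v = 1 then 1 else 0) := by
        apply Finset.sum_congr rfl
        intro v hv
        rw [Finset.mem_filter] at hv
        have := hv.2
        by_cases h : c v = 1
        · rw [if_pos h]; omega
        · rw [if_neg h]; omega
      rw [h1, ← Finset.card_filter, Finset.filter_filter]
      rw [hN₁]
      congr 1
      ext v
      simp only [Finset.mem_filter, mem_univ, true_and]
      omega
    have hpart : Fintype.card α = Lf.card + N₁.card + B₂.card := by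
      have h0 := Finset.card_filter_add_card_filter_not
        (s := univ) (p := fun v => c v = 0)
      have h1 := Finset.card_filter_add_card_filter_not
        (s := univ.filter fun v => ¬ c v = 0) (p := fun v => c v = 1)
      have e1 : (univ.filter fun v => ¬ c v = 0).filter (fun v => c v = 1) = N₁ := by
        rw [hN₁]
        ext v
        simp only [Finset.mem_filter, mem_univ, true_and]
        omega
      have e2 : (univ.filter fun v => ¬ c v = 0).filter (fun v => ¬ c v = 1) = B₂ := by
        rw [hB₂]
        ext v
        simp only [Finset.mem_filter, mem_univ, true_and]
        omega
      rw [e1, e2] at h1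
      rw [Finset.card_univ, ← hLf] at h0
      omega
    have hB₂sum : 2 * B₂.card ≤ ∑ v ∈ B₂, c v := by
      calc 2 * B₂.card = ∑ _v ∈ B₂, 2 := by rw [Finset.sum_const]; ring
      _ ≤ ∑ v ∈ B₂, c v := by
        apply Finset.sum_le_sum
        intro v hv
        rw [hB₂, Finset.mem_filter] at hv
        exact hv.2
    -- coverage
    have hcover : (univ : Finset α) ⊆ R ∪ D ∪ X₁ ∪ X₂ ∪ X₀ ∪ B₂ := by
      intro v _
      have hmem : v ∈ R ∨ v ∈ D ∨ v ∈ X₁ ∨ v ∈ X₂ ∨ v ∈ X₀ ∨ v ∈ B₂ := by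
        by_cases h0 : c v = 0
        · exact Or.inl (by rw [hR, Finset.mem_union]; exact Or.inl (by rw [hLf]; simp [h0]))
        by_cases h2 : 2 ≤ c v
        · exact Or.inr (Or.inr (Or.inr (Or.inr (Or.inr (by rw [hB₂]; simp [h2])))))
        have h1 : c v = 1 := by omega
        by_cases hvr : v = r
        · refine Or.inl ?_
          rw [hR, Finset.mem_union]
          refine Or.inr ?_
          simp only [Finset.mem_filter, mem_univ, true_and]
          exact ⟨hvr, by rw [← hvr]; exact h1⟩
        by_cases hdeg : (univ.filter fun u => H.Adj v u).card ≤ 2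
        · exact Or.inr (Or.inl (by rw [hD]; simp [hdeg]))
        · have hdeg3 : 3 ≤ (univ.filter fun u => H.Adj v u).card := by omega
          rcases key_classify (hopt := hopt) (hf := hf) hvr h1 hdeg3 with hk | hk | hk
          · exact Or.inr (Or.inr (Or.inl (by rw [hX₁]; simp [hvr, hc, hk])))
          · exact Or.inr (Or.inr (Or.inr (Or.inl (by
              rw [hX₂]
              simp only [Finset.mem_filter, mem_univ, true_and]
              exact ⟨hvr, h1, hk.1, hk.2.1, hk.2.2⟩))))
          · exact Or.inr (Or.inr (Or.inr (Or.inr (Or.inl (by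
              rw [hX₀]
              simp only [Finset.mem_filter, mem_univ, true_and]
              exact ⟨hvr, hk.1, hk.2⟩)))))
      simp only [Finset.mem_union]
      tauto
    have hLfR : Lf ⊆ R := by rw [hR]; exact Finset.subset_union_left
    have hLfRD : Lf.card ≤ (R ∪ D).card :=
      Finset.card_le_card (le_trans hLfR Finset.subset_union_left)
    have hcardle : Fintype.card α ≤ (R ∪ D).card + X₁.card + X₂.card + X₀.card + B₂.card := by
      calc Fintype.card α = (univ : Finset α).card := (Finset.card_univ).symm
      _ ≤ (R ∪ D ∪ X₁ ∪ X₂ ∪ X₀ ∪ B₂).card := Finset.card_le_card hcover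
      _ ≤ _ := by
        refine le_trans (Finset.card_union_le _ _) ?_
        gcongr
        refine le_trans (Finset.card_union_le _ _) ?_
        gcongr
        refine le_trans (Finset.card_union_le _ _) ?_
        gcongr
        exact Finset.card_union_le _ _
    have hq : 1 ≤ Fintype.card α := by omega
    omega

end CDSAux

open CDSAux


lemma walk_avoid_reachable {V : Type*} (G : SimpleGraph V) (S : Set V) (x : ↥S) :
    ∀ {u z : ↥S} (p : (G.induce S).Walk u z), x ∉ p.support →
      ∀ (hu : (↑u : V) ∈ S \ {(↑x : V)}) (hz : (↑z : V) ∈ S \ {(↑x : V)}),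
      (G.induce (S \ {(↑x : V)})).Reachable ⟨↑u, hu⟩ ⟨↑z, hz⟩ := by
  intro u z p
  induction p with
  | nil =>
    intro _ hu hz
    exact SimpleGraph.Reachable.refl _
  | @cons a b w h q ih =>
    intro hp hu hz
    rw [SimpleGraph.Walk.support_cons, List.mem_cons] at hp
    push_neg at hp
    have hbq : b ∈ q.support := SimpleGraph.Walk.start_mem_support q
    have hbx : b ≠ x := fun hb => hp.2 (hb ▸ hbq)
    have hb : (↑b : V) ∈ S \ {(↑x : V)} :=
      ⟨b.2, fun hc => hbx (Subtype.ext hc)⟩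
    have hadj : (G.induce (S \ {(↑x : V)})).Adj ⟨↑a, hu⟩ ⟨↑b, hb⟩ := h
    exact (hadj.reachable).trans (ih hp.2 hb hz)

/-- S is a connected dominating set of G: every vertex outside S has a neighbor in S,
and the subgraph induced by S is connected. -/
def IsCDS {V : Type*} (G : SimpleGraph V) (S : Set V) : Prop :=
  (∀ v ∉ S, ∃ u ∈ S, G.Adj v u) ∧ (G.induce S).Connected

/-- S is a minimal connected dominating set: no proper subset is a connected dominating set. -/
def IsMinCDS {V : Type*} (G : SimpleGraph V) (S : Set V) : Prop :=
  IsCDS G S ∧ ∀ S' ⊂ S, ¬ IsCDS G S'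

/-- The S-degree of v: the number of neighbors of v lying in S. -/
noncomputable def sDegree {V : Type*} (G : SimpleGraph V) (S : Set V) (v : V) : ℕ :=
  {u ∈ S | G.Adj v u}.ncard

/-- For a minimal connected dominating set S with |S| ≥ (4/10)n, at least n/20 vertices
have S-degree at most 2. -/
theorem low_sdegree_lower_bound {V : Type*} [Fintype V] (G : SimpleGraph V) (S : Set V)
    (hS : IsMinCDS G S) (hsize : (4 / 10 : ℝ) * (Fintype.card V : ℝ) ≤ (S.ncard : ℝ)) :
    (Fintype.card V : ℝ) / 20 ≤ ({v : V | sDegree G S v ≤ 2}.ncard : ℝ) := by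
  classical
  set n := Fintype.card V with hn
  set L : Set V := {v : V | sDegree G S v ≤ 2} with hL
  by_cases hS2 : S.ncard ≤ 2
  · -- trivial case: every vertex has S-degree at most 2
    have hLuniv : L = Set.univ := by
      ext v
      simp only [hL, Set.mem_setOf_eq, Set.mem_univ, iff_true]
      calc sDegree G S v ≤ S.ncard := by
            apply Set.ncard_le_ncard _ S.toFinite
            intro u hu
            exact hu.1
      _ ≤ 2 := hS2
    rw [hLuniv, Set.ncard_univ, Nat.card_eq_fintype_card, ← hn]
    have : (0:ℝ) ≤ (n:ℝ) := Nat.cast_nonneg n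
    linarith
  · push_neg at hS2
    have hfin : Fintype ↥S := (S.toFinite).fintype
    have hScard : Fintype.card ↥S = S.ncard := by
      rw [← Nat.card_coe_set_eq, Nat.card_eq_fintype_card]
    set H : SimpleGraph ↥S := G.induce S with hH
    have hconn : H.Connected := hS.1.2
    have hdec : DecidableRel H.Adj := Classical.decRel _
    have hcard2 : 2 ≤ Fintype.card ↥S := by omega
    obtain ⟨R, hRwalk, hRcount⟩ := core (H := H) hconn hcard2
    set D : Finset ↥S :=
      Finset.univ.filter (fun v => (Finset.univ.filter fun u => H.Adj v u).card ≤ 2) with hD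
    -- S-degrees match induced degrees
    have hdeg_eq : ∀ v : ↥S, (Finset.univ.filter fun u => H.Adj v u).card
        = sDegree G S (↑v : V) := by
      intro v
      unfold sDegree
      have e1 : ({u : ↥S | H.Adj v u} : Set ↥S)
          = ↑(Finset.univ.filter fun u => H.Adj v u) := by
        ext u
        simp
      have e2 : {u ∈ S | G.Adj (↑v : V) u} = Subtype.val '' {u : ↥S | H.Adj v u} := by
        ext u
        constructor
        · rintro ⟨huS, hadj⟩
          exact ⟨⟨u, huS⟩, hadj, rfl⟩
        · rintro ⟨w, hw, rfl⟩
          exact ⟨w.2, hw⟩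
      rw [e2, Set.ncard_image_of_injective _ Subtype.val_injective, e1,
        Set.ncard_coe_finset]
    -- D vertices are in L ∩ S
    have hDsub : (Subtype.val '' (↑D : Set ↥S)) ⊆ L ∩ S := by
      rintro u ⟨v, hv, rfl⟩
      rw [Finset.mem_coe, hD, Finset.mem_filter] at hv
      refine ⟨?_, v.2⟩
      simp only [hL, Set.mem_setOf_eq]
      rw [← hdeg_eq v]
      exact hv.2
    -- private neighbours for R vertices
    have hpriv : ∀ x ∈ R, ∃ u : V, u ∉ S ∧ (∀ w ∈ S, G.Adj u w → w = (↑x : V)) := by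
      intro x hx
      obtain ⟨z, hzx, hwalks⟩ := hRwalk x hx
      have hzmem : (↑z : V) ∈ S \ {(↑x : V)} :=
        ⟨z.2, fun hc => hzx (Subtype.ext hc)⟩
      have hconn' : (G.induce (S \ {(↑x : V)})).Connected := by
        rw [SimpleGraph.connected_iff]
        constructor
        · intro a b
          have haux : ∀ (a : ↥(S \ {(↑x : V)})),
              (G.induce (S \ {(↑x : V)})).Reachable a ⟨↑z, hzmem⟩ := by
            intro a
            have haS : (↑a : V) ∈ S := a.2.1
            set a1 : ↥S := ⟨↑a, haS⟩ with ha1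
            have hax : a1 ≠ x := by
              intro h
              exact a.2.2 (Set.mem_singleton_iff.mpr (congrArg Subtype.val h))
            obtain ⟨p, hp⟩ := hwalks a1 hax
            exact walk_avoid_reachable G S x p hp a.2 hzmem
          exact (haux a).trans (haux b).symm
        · exact ⟨⟨↑z, hzmem⟩⟩
      have hssub : S \ {(↑x : V)} ⊂ S := by
        constructor
        · exact Set.diff_subset
        · intro hsub
          have := hsub x.2
          exact this.2 rfl
      have hnot := hS.2 _ hssub
      have hnotdom : ¬ (∀ v ∉ S \ {(↑x : V)}, ∃ u ∈ S \ {(↑x : V)}, G.Adj v u) := by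
        intro hdom
        exact hnot ⟨hdom, hconn'⟩
      push_neg at hnotdom
      obtain ⟨u, hu1, hu2⟩ := hnotdom
      -- x has a neighbour in S different from x
      have hxnbr : ∃ w : ↥S, H.Adj x w := by
        obtain ⟨p⟩ := hconn.preconnected x z
        cases p with
        | nil => exact absurd rfl hzx
        | cons h q => exact ⟨_, h⟩
      have hux : u ≠ (↑x : V) := by
        intro h
        obtain ⟨w, hw⟩ := hxnbr
        have hwx : w ≠ x := fun hc => (SimpleGraph.irrefl H) (hc ▸ hw)
        have hwmem : (↑w : V) ∈ S \ {(↑x : V)} :=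
          ⟨w.2, fun hc => hwx (Subtype.ext hc)⟩
        have : G.Adj u ↑w := by
          rw [h]
          exact hw
        exact hu2 ↑w hwmem this
      have huS : u ∉ S := by
        intro h
        exact hu1 ⟨h, hux⟩
      refine ⟨u, huS, ?_⟩
      intro w hwS hadj
      by_contra hne
      exact hu2 w ⟨hwS, hne⟩ hadj
    -- choose private neighbours
    have hVne : Nonempty V := ⟨hconn.nonempty.some.val⟩
    choose! priv hpriv1 hpriv2 using hpriv
    have hprivL : ∀ x ∈ R, priv x ∈ L \ S := by
      intro x hx
      refine ⟨?_, hpriv1 x hx⟩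
      simp only [hL, Set.mem_setOf_eq]
      unfold sDegree
      calc ({u ∈ S | G.Adj (priv x) u}).ncard ≤ ({(↑x : V)} : Set V).ncard := by
            apply Set.ncard_le_ncard _ (Set.finite_singleton _)
            intro w hw
            exact hpriv2 x hx w hw.1 hw.2
      _ ≤ 2 := by rw [Set.ncard_singleton]; omega
    have hprivinj : Set.InjOn priv (↑R : Set ↥S) := by
      intro x hx y hy hxy
      by_contra hne
      obtain ⟨w, hwS, hwadj⟩ := hS.1.1 (priv x) (hpriv1 x hx)
      have h1 := hpriv2 x hx w hwS hwadj
      have h2 := hpriv2 y hy w hwS (by rwa [hxy] at hwadj)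
      exact hne (Subtype.ext (by rw [← h1, ← h2]))
    -- cardinality chain
    have hLsplit : (L ∩ S).ncard + (L \ S).ncard = L.ncard :=
      Set.ncard_inter_add_ncard_diff_eq_ncard L S (L.toFinite)
    have hDcard : (D.card : ℕ) ≤ (L ∩ S).ncard := by
      calc D.card = (Subtype.val '' (↑D : Set ↥S)).ncard := by
            rw [Set.ncard_image_of_injective _ Subtype.val_injective, Set.ncard_coe_finset]
      _ ≤ (L ∩ S).ncard := Set.ncard_le_ncard hDsub ((L ∩ S).toFinite)
    have hRcard : (R.card : ℕ) ≤ (L \ S).ncard := by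
      calc R.card = (priv '' (↑R : Set ↥S)).ncard := by
            rw [Set.ncard_image_of_injOn hprivinj, Set.ncard_coe_finset]
      _ ≤ (L \ S).ncard := by
            apply Set.ncard_le_ncard _ ((L \ S).toFinite)
            intro u hu
            obtain ⟨x, hx, hxu⟩ := hu
            rw [← hxu]
            exact hprivL x hx
    have hmain : S.ncard ≤ 6 * L.ncard := by
      have h1 : (R ∪ D).card ≤ R.card + D.card := Finset.card_union_le _ _
      have h2 : R.card + D.card ≤ L.ncard := by omega
      omega
    -- final arithmetic
    have hge : (0:ℝ) ≤ (L.ncard : ℝ) := Nat.cast_nonneg _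
    have hcast : (S.ncard : ℝ) ≤ 6 * (L.ncard : ℝ) := by
      exact_mod_cast hmain
    linarith
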